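/- Let n, k, y be integers with 1 ≤ k ≤ n, y even, 2 ≤ y < k, and yk/n ≤ (log 2)/2 (log denoting natural logarithm). Then the probability that a lazy step selects between 1 and y/2 (inclusive) of the y mismatched coordinates is at least yk/(8n); that is, ∑_{i : 1 ≤ i ≤ y/2} binom(y,i)·binom(n−y, k−i) / (2·binom(n,k)) ≥ yk/(8n). -/

import Mathlib

open Finset

noncomputable def pcoup (n k y : ℕ) (i : ℕ) : ℝ :=
  ((y.choose i * (n - y).choose (k - i) : ℕ) : ℝ) / (2 * n.choose k)

lemma aux_choose_sub (n k : ℕ) (hk : 2 ≤ k) :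
    ∀ y, 1 ≤ y →
      (n-1).choose (k-1) ≤ (n-y).choose (k-1) + (y-1) * (n-2).choose (k-2) := by
  intro y
  induction y with
  | zero => omega
  | succ y ih =>
    intro _
    rcases Nat.eq_zero_or_pos y with hy0 | hy1
    · subst hy0; simp
    · have step : (n-y).choose (k-1) ≤ (n-(y+1)).choose (k-1) + (n-2).choose (k-2) := by
        rcases le_or_gt n y with hny | hny
        · have h0 : n - y = 0 := by omega
          rw [h0]
          have h2 : k - 1 = (k-2) + 1 := by omega
          rw [h2, Nat.choose_zero_succ]
          exact Nat.zero_le _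
        · have h1 : n - y = (n - (y+1)) + 1 := by omega
          have h2 : k - 1 = (k-2) + 1 := by omega
          rw [h1, h2, Nat.choose_succ_succ]
          simp only [Nat.succ_eq_add_one]
          have : (n - (y+1)).choose (k-2) ≤ (n-2).choose (k-2) :=
            Nat.choose_le_choose _ (by omega)
          omega
      have hih := ih hy1
      have h3 : (y+1) - 1 = (y - 1) + 1 := by omega
      calc (n-1).choose (k-1) ≤ (n-y).choose (k-1) + (y-1) * (n-2).choose (k-2) := hih
        _ ≤ ((n-(y+1)).choose (k-1) + (n-2).choose (k-2)) + (y-1) * (n-2).choose (k-2) := by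
            omega
        _ = (n-(y+1)).choose (k-1) + ((y+1)-1) * (n-2).choose (k-2) := by
            rw [h3]; ring

theorem stmt_13 (n k y : ℕ) (hk1 : 1 ≤ k) (hkn : k ≤ n) (hye : Even y) (hy2 : 2 ≤ y)
    (hyk : y < k) (h1 : (y : ℝ) * k / n ≤ Real.log 2 / 2) :
    (y : ℝ) * k / (8 * n) ≤ ∑ i ∈ Finset.Icc 1 (y / 2), pcoup n k y i := by
  have hk3 : 3 ≤ k := by omega
  have hn : 3 ≤ n := by omega
  have hnR : (0:ℝ) < n := by positivity
  -- key nat facts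
  have f2nat : (n-1) * (n-2).choose (k-2) = (n-1).choose (k-1) * (k-1) := by
    have h := Nat.add_one_mul_choose_eq (n-2) (k-2)
    have e1 : (n-2) + 1 = n - 1 := by omega
    have e2 : (k-2) + 1 = k - 1 := by omega
    rwa [e1, e2] at h
  have f3nat : n * (n-1).choose (k-1) = n.choose k * k := by
    have h := Nat.add_one_mul_choose_eq (n-1) (k-1)
    have e1 : (n-1) + 1 = n := by omega
    have e2 : (k-1) + 1 = k := by omega
    rwa [e1, e2] at h
  have keynat : n * (n-2).choose (k-2) ≤ k * (n-1).choose (k-1) := by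
    obtain ⟨k', rfl⟩ : ∃ k', k = k' + 1 := ⟨k-1, by omega⟩
    obtain ⟨n', rfl⟩ : ∃ n', n = n' + 1 := ⟨n-1, by omega⟩
    have hmul : (n'+1) * ((k'+1)-1) ≤ (k'+1) * ((n'+1)-1) := by
      simp only [Nat.add_sub_cancel]
      nlinarith [show k' ≤ n' by omega]
    have key : ((n'+1) * (n'+1-2).choose (k'+1-2)) * ((n'+1)-1)
        ≤ ((k'+1) * (n'+1-1).choose (k'+1-1)) * ((n'+1)-1) := by
      calc ((n'+1) * (n'+1-2).choose (k'+1-2)) * ((n'+1)-1)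
          = (n'+1) * (((n'+1)-1) * (n'+1-2).choose (k'+1-2)) := by ring
        _ = (n'+1) * ((n'+1-1).choose (k'+1-1) * ((k'+1)-1)) := by rw [f2nat]
        _ = ((n'+1) * ((k'+1)-1)) * (n'+1-1).choose (k'+1-1) := by ring
        _ ≤ ((k'+1) * ((n'+1)-1)) * (n'+1-1).choose (k'+1-1) :=
            Nat.mul_le_mul_right _ hmul
        _ = ((k'+1) * (n'+1-1).choose (k'+1-1)) * ((n'+1)-1) := by ring
    exact Nat.le_of_mul_le_mul_right key (by omega)
  -- real casts
  have ineq2 : (n:ℝ) * ((n-2).choose (k-2) : ℝ) ≤ (k:ℝ) * ((n-1).choose (k-1) : ℝ) := by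
    exact_mod_cast keynat
  have eq3 : (k:ℝ) * (n.choose k : ℝ) = (n:ℝ) * ((n-1).choose (k-1) : ℝ) := by
    have : (n:ℝ) * ((n-1).choose (k-1):ℝ) = (n.choose k:ℝ) * k := by exact_mod_cast f3nat
    linarith
  have ineq1 : ((n-1).choose (k-1) : ℝ)
      ≤ ((n-y).choose (k-1) : ℝ) + ((y:ℝ) - 1) * ((n-2).choose (k-2) : ℝ) := by
    have h := aux_choose_sub n k (by omega) y (by omega)
    have hcast : ((n-1).choose (k-1) : ℝ)
        ≤ ((n-y).choose (k-1) : ℝ) + ((y-1 : ℕ):ℝ) * ((n-2).choose (k-2) : ℝ) := by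
      exact_mod_cast h
    have hy1 : ((y-1 : ℕ):ℝ) = (y:ℝ) - 1 := by
      have h1y : (1:ℕ) ≤ y := by omega
      push_cast [h1y]; ring
    rwa [hy1] at hcast
  have ha0 : (0:ℝ) ≤ ((n-1).choose (k-1) : ℝ) := Nat.cast_nonneg _
  have hb0 : (0:ℝ) ≤ ((n-2).choose (k-2) : ℝ) := Nat.cast_nonneg _
  have hc0 : (0:ℝ) ≤ ((n-y).choose (k-1) : ℝ) := Nat.cast_nonneg _
  have hCnpos : (0:ℝ) < (n.choose k : ℝ) := by exact_mod_cast Nat.choose_pos hkn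
  have hlog : Real.log 2 ≤ 1 := by
    have := Real.log_two_lt_d9; linarith
  have hhalf : (y:ℝ) * k / n ≤ 1/2 := by linarith
  have hyR : (1:ℝ) ≤ (y:ℝ) := by exact_mod_cast (by omega : 1 ≤ y)
  -- (y-1)*b ≤ a/2
  have ineq4 : ((y:ℝ) - 1) * ((n-2).choose (k-2) : ℝ) ≤ (1/2) * ((n-1).choose (k-1) : ℝ) := by
    have hb' : ((n-2).choose (k-2) : ℝ) ≤ (k:ℝ)/n * ((n-1).choose (k-1) : ℝ) := by
      rw [div_mul_eq_mul_div, le_div_iff₀ hnR]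
      nlinarith
    calc ((y:ℝ)-1) * ((n-2).choose (k-2) : ℝ)
        ≤ ((y:ℝ)-1) * ((k:ℝ)/n * ((n-1).choose (k-1) : ℝ)) :=
          mul_le_mul_of_nonneg_left hb' (by linarith)
      _ ≤ (y:ℝ) * ((k:ℝ)/n * ((n-1).choose (k-1) : ℝ)) := by
          apply mul_le_mul_of_nonneg_right _ (by positivity)
          linarith
      _ = ((y:ℝ) * k / n) * ((n-1).choose (k-1) : ℝ) := by ring
      _ ≤ (1/2) * ((n-1).choose (k-1) : ℝ) := mul_le_mul_of_nonneg_right hhalf ha0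
  have hac : ((n-1).choose (k-1) : ℝ) ≤ 2 * ((n-y).choose (k-1) : ℝ) := by linarith
  -- term at i = 1
  have hterm : (y:ℝ) * k / (8*n) ≤ pcoup n k y 1 := by
    unfold pcoup
    rw [Nat.choose_one_right]
    push_cast
    rw [div_le_div_iff₀ (by positivity) (by positivity)]
    have hy0 : (0:ℝ) ≤ (y:ℝ) := by linarith
    calc (y:ℝ) * k * (2 * (n.choose k:ℝ)) = 2 * (y:ℝ) * ((k:ℝ) * (n.choose k:ℝ)) := by ring
      _ = 2 * (y:ℝ) * ((n:ℝ) * ((n-1).choose (k-1):ℝ)) := by rw [eq3]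
      _ ≤ 2 * (y:ℝ) * ((n:ℝ) * (2 * ((n-y).choose (k-1):ℝ))) := by
          apply mul_le_mul_of_nonneg_left _ (by linarith)
          exact mul_le_mul_of_nonneg_left hac (le_of_lt hnR)
      _ = 4 * ((y:ℝ) * ((n:ℝ) * ((n-y).choose (k-1):ℝ))) := by ring
      _ ≤ 8 * ((y:ℝ) * ((n:ℝ) * ((n-y).choose (k-1):ℝ))) := by
          have h0 : (0:ℝ) ≤ (y:ℝ) * ((n:ℝ) * ((n-y).choose (k-1):ℝ)) := by positivity
          linarith
      _ = (y:ℝ) * ((n-y).choose (k-1):ℝ) * (8 * n) := by ring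
  have hmem : 1 ∈ Finset.Icc 1 (y/2) :=
    Finset.mem_Icc.mpr ⟨le_refl 1, by omega⟩
  have hsum : pcoup n k y 1 ≤ ∑ i ∈ Finset.Icc 1 (y / 2), pcoup n k y i := by
    apply Finset.single_le_sum _ hmem
    intro i _
    unfold pcoup
    positivity
  linarith
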